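/- arXiv:1003.3068 — 2 statements merged into one kernel-verified Lean document; each statement's English description precedes it below -/
import Mathlib

section
/- Let k > 0 and α ∈ ℝ² with |αₙ| ≠ k for all n ∈ ℤ². There exist constants C₁ > 0 and C₂ > 0, depending only on k and α, such that for every sequence (Ẽₙ)_{n∈ℤ²} ⊂ ℂ³ of tangential vectors (e₃·Ẽₙ = 0) with Σₙ (1+|αₙ|²)^{−1/2}(|Ẽₙ|² + |αₙ·Ẽₙ|²) < ∞, the pairing ⟨RẼ,Ẽ⟩ := 4π² Σ_{n∈ℤ²} R̂ₙ · conj(Ẽₙ), with R̂ₙ = −(1/(iβₙ))[k²Ẽₙ − (αₙ·Ẽₙ)αₙ], satisfies the Gårding-type inequality −Re ⟨RẼ,Ẽ⟩ ≥ C₁ Σ_{n∈ℤ²} (1+|αₙ|²)^{−1/2} |αₙ·Ẽₙ|² − C₂ Σ_{n∈ℤ²} (1+|αₙ|²)^{−1/2} |Ẽₙ|². -/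
open scoped Real

/-- `|αₙ|` for `αₙ = (α₁+n₁, α₂+n₂, 0)`. -/
noncomputable def alphaNorm (α : ℝ × ℝ) (n : ℤ × ℤ) : ℝ :=
  Real.sqrt ((α.1 + (n.1 : ℝ))^2 + (α.2 + (n.2 : ℝ))^2)

/-- The vector `αₙ = (α₁+n₁, α₂+n₂, 0)` viewed in `ℂ³`. -/
noncomputable def alphaVec (α : ℝ × ℝ) (n : ℤ × ℤ) : Fin 3 → ℂ :=
  ![((α.1 + (n.1 : ℝ) : ℝ) : ℂ), ((α.2 + (n.2 : ℝ) : ℝ) : ℂ), 0]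

/-- The vertical wavenumbers `βₙ` of the Rayleigh expansion:
`βₙ = (k² − |αₙ|²)^{1/2}` if `|αₙ| < k` and `βₙ = i(|αₙ|² − k²)^{1/2}` if `|αₙ| > k`. -/
noncomputable def betaN (k : ℝ) (α : ℝ × ℝ) (n : ℤ × ℤ) : ℂ :=
  if alphaNorm α n < k then (Real.sqrt (k^2 - (alphaNorm α n)^2) : ℂ)
  else Complex.I * (Real.sqrt ((alphaNorm α n)^2 - k^2) : ℂ)

/-- Bilinear dot product on `ℂ³` (no conjugation). -/
def cdot (a b : Fin 3 → ℂ) : ℂ := a 0 * b 0 + a 1 * b 1 + a 2 * b 2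

/-- Hermitian pairing `a · conj b` on `ℂ³`. -/
noncomputable def hpair (a b : Fin 3 → ℂ) : ℂ := ∑ j : Fin 3, a j * (starRingEnd ℂ) (b j)

/-- Squared Euclidean norm `|v|² = Σⱼ|vⱼ|²` of `v ∈ ℂ³`. -/
noncomputable def enormSq (v : Fin 3 → ℂ) : ℝ := ∑ j : Fin 3, ‖v j‖^2

/-- The Fourier symbol `R̂ₙ = −(1/(iβₙ))[k²Ẽₙ − (αₙ·Ẽₙ)αₙ]` of the transparent
boundary (Dirichlet-to-Neumann) operator `R`. -/
noncomputable def Rsymb (k : ℝ) (α : ℝ × ℝ) (n : ℤ × ℤ) (En : Fin 3 → ℂ) : Fin 3 → ℂ :=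
  fun j => -(1 / (Complex.I * betaN k α n)) *
    ((k : ℂ)^2 * En j - cdot (alphaVec α n) En * alphaVec α n j)

/-- The Sobolev weight `(1+|αₙ|²)^{−1/2}`. -/
noncomputable def sw (α : ℝ × ℝ) (n : ℤ × ℤ) : ℝ := 1 / Real.sqrt (1 + (alphaNorm α n)^2)


open scoped Real

lemma hpair_eq (k : ℝ) (α : ℝ × ℝ) (n : ℤ × ℤ) (E : Fin 3 → ℂ) :
    hpair (Rsymb k α n E) E = -(1 / (Complex.I * betaN k α n)) *
      (((k^2 * enormSq E - ‖cdot (alphaVec α n) E‖^2 : ℝ)) : ℂ) := by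
  have hd : ((‖cdot (alphaVec α n) E‖^2 : ℝ) : ℂ)
      = cdot (alphaVec α n) E * (starRingEnd ℂ) (cdot (alphaVec α n) E) := by
    rw [Complex.mul_conj, Complex.sq_norm]
  have he : ((enormSq E : ℝ) : ℂ) = E 0 * (starRingEnd ℂ) (E 0) + E 1 * (starRingEnd ℂ) (E 1)
      + E 2 * (starRingEnd ℂ) (E 2) := by
    simp [enormSq, Fin.sum_univ_three, Complex.sq_norm, Complex.mul_conj]
  have hcd : (starRingEnd ℂ) (cdot (alphaVec α n) E)
      = alphaVec α n 0 * (starRingEnd ℂ) (E 0) + alphaVec α n 1 * (starRingEnd ℂ) (E 1)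
        + alphaVec α n 2 * (starRingEnd ℂ) (E 2) := by
    simp [cdot, alphaVec, map_add, map_mul, Complex.conj_ofReal]
  rw [Complex.ofReal_sub, Complex.ofReal_mul, he, hd, hcd]
  simp only [hpair, Rsymb, Fin.sum_univ_three]
  push_cast
  ring

lemma re_hpair (k : ℝ) (α : ℝ × ℝ) (n : ℤ × ℤ) (E : Fin 3 → ℂ) :
    (hpair (Rsymb k α n E) E).re =
      if alphaNorm α n < k then 0
      else (k^2 * enormSq E - ‖cdot (alphaVec α n) E‖^2)
            / Real.sqrt ((alphaNorm α n)^2 - k^2) := by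
  rw [hpair_eq]
  set A : ℝ := k^2 * enormSq E - ‖cdot (alphaVec α n) E‖^2 with hA
  by_cases hn : alphaNorm α n < k
  · rw [betaN, if_pos hn]
    simp [hn]
  · rw [betaN, if_neg hn]
    simp only [hn, if_false]
    set b := Real.sqrt ((alphaNorm α n)^2 - k^2)
    rcases eq_or_ne b 0 with h | h
    · simp [h]
    · have hb : (b:ℂ) ≠ 0 := by exact_mod_cast h
      have : -(1 / (Complex.I * (Complex.I * (b:ℂ)))) * (A:ℂ) = ((A/b : ℝ):ℂ) := by
        rw [← mul_assoc, Complex.I_mul_I]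
        push_cast
        field_simp
      rw [this, Complex.ofReal_re]

lemma cs_bound (α : ℝ × ℝ) (n : ℤ × ℤ) (E : Fin 3 → ℂ) :
    ‖cdot (alphaVec α n) E‖^2 ≤ (alphaNorm α n)^2 * enormSq E := by
  set a0 := α.1 + (n.1:ℝ) with ha0
  set a1 := α.2 + (n.2:ℝ) with ha1
  have h1 : ‖cdot (alphaVec α n) E‖
      ≤ |a0| * ‖E 0‖ + |a1| * ‖E 1‖ := by
    have : cdot (alphaVec α n) E = (a0:ℂ) * E 0 + (a1:ℂ) * E 1 := by
      rw [ha0, ha1]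
      simp [cdot, alphaVec]
    rw [this]
    refine le_trans (norm_add_le _ _) ?_
    simp [Complex.norm_real]
  have h2 : (alphaNorm α n)^2 = a0^2 + a1^2 := Real.sq_sqrt (by positivity)
  have h3 : enormSq E = ‖E 0‖^2 + ‖E 1‖^2 + ‖E 2‖^2 := by
    simp [enormSq, Fin.sum_univ_three]
  have e0 := norm_nonneg (E 0)
  have e1 := norm_nonneg (E 1)
  have e2 := norm_nonneg (E 2)
  have hc := norm_nonneg (cdot (alphaVec α n) E)
  rw [h2, h3]
  nlinarith [sq_nonneg (|a0| * ‖E 1‖ - |a1| * ‖E 0‖),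
    sq_abs a0, sq_abs a1, abs_nonneg a0, abs_nonneg a1,
    sq_nonneg (‖E 2‖)]

lemma finite_low (α : ℝ × ℝ) (R : ℝ) : {n : ℤ × ℤ | alphaNorm α n ≤ R}.Finite := by
  apply Set.Finite.subset (Set.finite_Icc (⌈-α.1-R⌉, ⌈-α.2-R⌉) (⌊-α.1+R⌋, ⌊-α.2+R⌋))
  intro n hn
  simp only [Set.mem_setOf_eq] at hn
  have key : ∀ x y : ℝ, 0 ≤ y → Real.sqrt (x^2 + y) ≤ R → |x| ≤ R := by
    intro x y hy h
    calc |x| = Real.sqrt (x^2) := (Real.sqrt_sq_eq_abs x).symm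
    _ ≤ Real.sqrt (x^2 + y) := Real.sqrt_le_sqrt (by linarith)
    _ ≤ R := h
  have hn' : Real.sqrt ((α.1 + (n.1:ℝ))^2 + (α.2 + (n.2:ℝ))^2) ≤ R := hn
  have h1 : |α.1 + (n.1:ℝ)| ≤ R := key _ _ (sq_nonneg _) hn'
  have h2 : |α.2 + (n.2:ℝ)| ≤ R := by
    apply key _ _ (sq_nonneg _)
    rw [add_comm]; exact hn'
  rw [abs_le] at h1 h2
  constructor
  · exact ⟨Int.ceil_le.2 (by linarith), Int.ceil_le.2 (by linarith)⟩
  · exact ⟨Int.le_floor.2 (by linarith), Int.le_floor.2 (by linarith)⟩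

lemma betaN_abs_lt {k : ℝ} {α : ℝ × ℝ} {n : ℤ × ℤ} (h : alphaNorm α n < k) :
    ‖betaN k α n‖ = Real.sqrt (k^2 - (alphaNorm α n)^2) := by
  rw [betaN, if_pos h, Complex.norm_real, Real.norm_eq_abs, abs_of_nonneg (Real.sqrt_nonneg _)]

lemma betaN_abs_ge {k : ℝ} {α : ℝ × ℝ} {n : ℤ × ℤ} (h : ¬ alphaNorm α n < k) :
    ‖betaN k α n‖ = Real.sqrt ((alphaNorm α n)^2 - k^2) := by
  rw [betaN, if_neg h, norm_mul, Complex.norm_I, Complex.norm_real, Real.norm_eq_abs, one_mul,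
    abs_of_nonneg (Real.sqrt_nonneg _)]

lemma betaN_pos {k : ℝ} (hk : 0 < k) {α : ℝ × ℝ} {n : ℤ × ℤ}
    (hw : alphaNorm α n ≠ k) : 0 < ‖betaN k α n‖ := by
  have hρ : 0 ≤ alphaNorm α n := Real.sqrt_nonneg _
  by_cases h : alphaNorm α n < k
  · rw [betaN_abs_lt h]
    apply Real.sqrt_pos.2
    nlinarith
  · rw [betaN_abs_ge h]
    have : k < alphaNorm α n := lt_of_le_of_ne (not_lt.1 h) (Ne.symm hw)
    apply Real.sqrt_pos.2
    nlinarith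

lemma inv_beta_bound (k : ℝ) (hk : 0 < k) (α : ℝ × ℝ)
    (hwood : ∀ n : ℤ × ℤ, alphaNorm α n ≠ k) :
    ∃ C₃ : ℝ, 0 < C₃ ∧ ∀ n, 1 / ‖betaN k α n‖ ≤ C₃ * sw α n := by
  set q : ℤ × ℤ → ℝ :=
    fun n => Real.sqrt (1 + (alphaNorm α n)^2) / ‖betaN k α n‖ with hq
  have hqnn : ∀ m, 0 ≤ q m := fun m => div_nonneg (Real.sqrt_nonneg _) (norm_nonneg _)
  have hfin := finite_low α (Real.sqrt (1 + 2*k^2))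
  have hsum_nn : (0:ℝ) ≤ ∑ m ∈ hfin.toFinset, q m := Finset.sum_nonneg fun m _ => hqnn m
  refine ⟨Real.sqrt 2 + ∑ m ∈ hfin.toFinset, q m,
    by have : (0:ℝ) < Real.sqrt 2 := Real.sqrt_pos.2 (by norm_num); linarith, ?_⟩
  intro n
  have hρnn : 0 ≤ alphaNorm α n := Real.sqrt_nonneg _
  have hqle : q n ≤ Real.sqrt 2 + ∑ m ∈ hfin.toFinset, q m := by
    by_cases hn : n ∈ hfin.toFinset
    · have h := Finset.single_le_sum (fun m _ => hqnn m) hn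
      have h2 : (0:ℝ) ≤ Real.sqrt 2 := Real.sqrt_nonneg 2
      linarith
    · rw [Set.Finite.mem_toFinset, Set.mem_setOf_eq, not_le] at hn
      have h0 : (0:ℝ) ≤ 1 + 2*k^2 := by positivity
      have h1 : 1 + 2*k^2 < (alphaNorm α n)^2 := by
        nlinarith [Real.sq_sqrt h0, Real.sqrt_nonneg (1 + 2*k^2)]
      have hkρ : k < alphaNorm α n := by nlinarith
      have hnlt : ¬ alphaNorm α n < k := not_lt.2 hkρ.le
      have hb : 0 < Real.sqrt ((alphaNorm α n)^2 - k^2) := Real.sqrt_pos.2 (by nlinarith)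
      have hle : Real.sqrt (1 + (alphaNorm α n)^2)
          ≤ Real.sqrt 2 * Real.sqrt ((alphaNorm α n)^2 - k^2) := by
        rw [← Real.sqrt_mul (by norm_num : (0:ℝ) ≤ 2)]
        exact Real.sqrt_le_sqrt (by nlinarith)
      have : q n ≤ Real.sqrt 2 := by
        rw [hq]
        simp only [betaN_abs_ge hnlt]
        exact (div_le_iff₀ hb).2 hle
      linarith
  have hs : 0 < Real.sqrt (1 + (alphaNorm α n)^2) := Real.sqrt_pos.2 (by positivity)
  have hβ : 0 < ‖betaN k α n‖ := betaN_pos hk (hwood n)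
  have hkey : 1 / ‖betaN k α n‖ = q n * sw α n := by
    rw [hq, sw]
    field_simp
  rw [hkey]
  have hswnn : 0 ≤ sw α n := by rw [sw]; positivity
  exact mul_le_mul_of_nonneg_right hqle hswnn

lemma aux_prop {c K C s e d2 : ℝ} (hc : 0 < c) (hK : 0 ≤ K) (hC : 0 ≤ C)
    (hs : 0 ≤ s) (he : 0 ≤ e) (hd2K : d2 ≤ K * e) :
    c * (s * d2) - c * K * (C + 1) * (s * e) ≤ 0 := by
  have h1 : s * d2 ≤ s * (K * e) := mul_le_mul_of_nonneg_left hd2K hs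
  have h2 : c * (s * d2) ≤ c * (s * (K * e)) := mul_le_mul_of_nonneg_left h1 hc.le
  nlinarith [mul_nonneg (mul_nonneg (mul_nonneg hc.le hK) hC) (mul_nonneg hs he)]

lemma aux_evan {c K C s e d2 b : ℝ} (hc : 0 < c) (hK : 0 ≤ K) (hC : 0 ≤ C)
    (hs : 0 ≤ s) (he : 0 ≤ e) (hd : 0 ≤ d2) (hb : 0 < b)
    (h1 : s ≤ 1/b) (h2 : 1/b ≤ C * s) :
    c * (s * d2) - c * K * (C + 1) * (s * e) ≤ -(c * ((K * e - d2) / b)) := by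
  have p1 : s * d2 ≤ d2 * (1/b) := by
    have := mul_le_mul_of_nonneg_left h1 hd
    linarith [this, mul_comm s d2]
  have p2 : e * (1/b) ≤ e * (C * s) := mul_le_mul_of_nonneg_left h2 he
  have hr : -(c * ((K * e - d2) / b)) = c * (d2 * (1/b)) - c * K * (e * (1/b)) := by
    field_simp
    ring
  rw [hr]
  have q1 : c * (s * d2) ≤ c * (d2 * (1/b)) := mul_le_mul_of_nonneg_left p1 hc.le
  have q2 : c * K * (e * (1/b)) ≤ c * K * (e * (C * s)) :=
    mul_le_mul_of_nonneg_left p2 (by positivity)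
  have q3 : c * K * (e * (C * s)) ≤ c * K * (C + 1) * (s * e) := by
    nlinarith [mul_nonneg (mul_nonneg (mul_nonneg hc.le hK) hs) he]
  linarith


/-- Gårding-type inequality for the transparent boundary operator: there are constants
`C₁, C₂ > 0` (depending only on `k, α`) such that for every tangential sequence `Ẽ`
with finite `H_t^{-1/2}(div)` norm,
`−Re⟨RẼ,Ẽ⟩ ≥ C₁ Σₙ (1+|αₙ|²)^{−1/2}|αₙ·Ẽₙ|² − C₂ Σₙ (1+|αₙ|²)^{−1/2}|Ẽₙ|²`. -/
theorem garding_inequality (k : ℝ) (hk : 0 < k) (α : ℝ × ℝ)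
    (hwood : ∀ n : ℤ × ℤ, alphaNorm α n ≠ k) :
    ∃ C₁ C₂ : ℝ, 0 < C₁ ∧ 0 < C₂ ∧
      ∀ Et : ℤ × ℤ → Fin 3 → ℂ, (∀ n, Et n 2 = 0) →
        (Summable fun n : ℤ × ℤ =>
          sw α n * (enormSq (Et n) + ‖cdot (alphaVec α n) (Et n)‖^2)) →
        C₁ * (∑' n : ℤ × ℤ, sw α n * ‖cdot (alphaVec α n) (Et n)‖^2)
            - C₂ * (∑' n : ℤ × ℤ, sw α n * enormSq (Et n))
          ≤ -(((4 * (π : ℂ)^2) * ∑' n : ℤ × ℤ, hpair (Rsymb k α n (Et n)) (Et n)).re) := by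
  obtain ⟨C₃, hC₃pos, hC₃⟩ := inv_beta_bound k hk α hwood
  have hπ : (0:ℝ) < 4 * π^2 := by positivity
  refine ⟨4 * π^2, 4 * π^2 * k^2 * (C₃ + 1), hπ,
    mul_pos (mul_pos hπ (pow_pos hk 2)) (by linarith), ?_⟩
  intro Et _ hsum
  have hswpos : ∀ n : ℤ × ℤ, 0 < sw α n := by
    intro n; rw [sw]; positivity
  have henn : ∀ n : ℤ × ℤ, 0 ≤ enormSq (Et n) := by
    intro n
    exact Finset.sum_nonneg fun j _ => sq_nonneg _
  have hdnn : ∀ n : ℤ × ℤ, 0 ≤ ‖cdot (alphaVec α n) (Et n)‖^2 :=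
    fun n => sq_nonneg _
  have hg1 : Summable (fun n : ℤ × ℤ => sw α n * ‖cdot (alphaVec α n) (Et n)‖^2) := by
    refine Summable.of_nonneg_of_le
      (fun n => mul_nonneg (hswpos n).le (hdnn n)) (fun n => ?_) hsum
    exact mul_le_mul_of_nonneg_left (by linarith [henn n]) (hswpos n).le
  have hg2 : Summable (fun n : ℤ × ℤ => sw α n * enormSq (Et n)) := by
    refine Summable.of_nonneg_of_le
      (fun n => mul_nonneg (hswpos n).le (henn n)) (fun n => ?_) hsum
    exact mul_le_mul_of_nonneg_left (by linarith [hdnn n]) (hswpos n).le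
  -- summability of the pairing
  have hnormb : ∀ n : ℤ × ℤ, ‖hpair (Rsymb k α n (Et n)) (Et n)‖ ≤
      (C₃ * (k^2 + 1)) *
        (sw α n * (enormSq (Et n) + ‖cdot (alphaVec α n) (Et n)‖^2)) := by
    intro n
    rw [hpair_eq]
    set e := enormSq (Et n)
    set d2 := ‖cdot (alphaVec α n) (Et n)‖^2 with hd2
    have hβ : 0 < ‖betaN k α n‖ := betaN_pos hk (hwood n)
    have hnval : ‖-(1 / (Complex.I * betaN k α n)) * ((k^2 * e - d2 : ℝ) : ℂ)‖
        = (1 / ‖betaN k α n‖) * |k^2 * e - d2| := by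
      rw [norm_mul, norm_neg, norm_div, norm_one, norm_mul,
        Complex.norm_I, one_mul,
        Complex.norm_real, Real.norm_eq_abs]
    rw [hnval]
    have hA : |k^2 * e - d2| ≤ k^2 * e + d2 := by
      rw [abs_le]
      constructor
      · nlinarith [henn n, hdnn n]
      · nlinarith [henn n, hdnn n]
    have h2 := hC₃ n
    have hstep : (1 / ‖betaN k α n‖) * |k^2 * e - d2|
        ≤ (C₃ * sw α n) * (k^2 * e + d2) := by
      exact mul_le_mul h2 hA (abs_nonneg _) (mul_nonneg hC₃pos.le (hswpos n).le)
    refine le_trans hstep ?_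
    have hee : 0 ≤ e := henn n
    have hdd : 0 ≤ d2 := hdnn n
    have hss : 0 ≤ sw α n := (hswpos n).le
    nlinarith [mul_nonneg (mul_nonneg hC₃pos.le hss) hee,
      mul_nonneg (mul_nonneg hC₃pos.le hss) hdd,
      mul_nonneg (mul_nonneg (mul_nonneg hC₃pos.le hss) hee) (sq_nonneg k),
      mul_nonneg (mul_nonneg (mul_nonneg hC₃pos.le hss) hdd) (sq_nonneg k)]
  have hnorm : Summable (fun n : ℤ × ℤ => ‖hpair (Rsymb k α n (Et n)) (Et n)‖) :=
    Summable.of_nonneg_of_le (fun n => norm_nonneg _) hnormb (hsum.mul_left _)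
  have hH : Summable (fun n : ℤ × ℤ => hpair (Rsymb k α n (Et n)) (Et n)) :=
    Summable.of_norm hnorm
  have hre : Summable (fun n : ℤ × ℤ => (hpair (Rsymb k α n (Et n)) (Et n)).re) := by
    apply Summable.of_abs
    refine Summable.of_nonneg_of_le (fun n => abs_nonneg _) (fun n => ?_) hnorm
    exact Complex.abs_re_le_norm _
  -- move re inside
  have hsplit : (((4 * (π:ℂ)^2) * ∑' n : ℤ × ℤ, hpair (Rsymb k α n (Et n)) (Et n)).re)
      = (4 * π^2) * ∑' n : ℤ × ℤ, (hpair (Rsymb k α n (Et n)) (Et n)).re := by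
    have h4 : (4 * (π:ℂ)^2) = ((4 * π^2 : ℝ) : ℂ) := by push_cast; ring
    rw [h4, Complex.re_ofReal_mul, Complex.re_tsum hH]
  rw [hsplit, ← tsum_mul_left, ← tsum_mul_left, ← tsum_mul_left, ← tsum_neg,
    ← Summable.tsum_sub (hg1.mul_left _) (hg2.mul_left _)]
  refine Summable.tsum_le_tsum (fun n => ?_) ((hg1.mul_left _).sub (hg2.mul_left _))
    ((hre.mul_left _).neg)
  -- pointwise inequality
  rw [re_hpair]
  have hee := henn n
  have hdd := hdnn n
  have hss := (hswpos n).le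
  by_cases hn : alphaNorm α n < k
  · rw [if_pos hn, mul_zero, neg_zero]
    have hρnn : 0 ≤ alphaNorm α n := Real.sqrt_nonneg _
    have hcs := cs_bound α n (Et n)
    have hρk : (alphaNorm α n)^2 * enormSq (Et n) ≤ k^2 * enormSq (Et n) :=
      mul_le_mul_of_nonneg_right (by nlinarith) hee
    exact aux_prop hπ (sq_nonneg k) hC₃pos.le hss hee (by linarith)
  · rw [if_neg hn]
    have hkρ : k < alphaNorm α n := lt_of_le_of_ne (not_lt.1 hn) (Ne.symm (hwood n))
    have hb : 0 < Real.sqrt ((alphaNorm α n)^2 - k^2) := Real.sqrt_pos.2 (by nlinarith)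
    have h1 : sw α n ≤ 1 / Real.sqrt ((alphaNorm α n)^2 - k^2) := by
      rw [sw]
      have hle : Real.sqrt ((alphaNorm α n)^2 - k^2) ≤ Real.sqrt (1 + (alphaNorm α n)^2) :=
        Real.sqrt_le_sqrt (by nlinarith)
      exact one_div_le_one_div_of_le hb hle
    have h2 : 1 / Real.sqrt ((alphaNorm α n)^2 - k^2) ≤ C₃ * sw α n := by
      have := hC₃ n
      rwa [betaN_abs_ge hn] at this
    exact aux_evan hπ (sq_nonneg k) hC₃pos.le hss hee hdd hb h1 h2
end

section
/- Let k > 0 and α ∈ ℝ² with |αₙ| ≠ k for all n ∈ ℤ². There exists a constant C > 0, depending only on k and α, such that for every n ∈ ℤ² and every tangential vector Ẽₙ ∈ ℂ³ (e₃·Ẽₙ = 0), the symbol R̂ₙ = −(1/(iβₙ))[k²Ẽₙ − (αₙ·Ẽₙ)αₙ] satisfies (1+|αₙ|²)^{−1/2} ( |R̂ₙ|² + |αₙ×R̂ₙ|² ) ≤ C (1+|αₙ|²)^{−1/2} ( |Ẽₙ|² + |αₙ·Ẽₙ|² ). Consequently, R maps sequences with Σₙ(1+|αₙ|²)^{−1/2}(|Ẽₙ|²+|αₙ·Ẽₙ|²)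 < ∞ boundedly to sequences with Σₙ(1+|αₙ|²)^{−1/2}(|R̂ₙ|²+|αₙ×R̂ₙ|²) < ∞. -/
open scoped Real

/-- Bilinearly extended cross product on `ℂ³`. -/
def ccross (a b : Fin 3 → ℂ) : Fin 3 → ℂ :=
  ![a 1 * b 2 - a 2 * b 1, a 2 * b 0 - a 0 * b 2, a 0 * b 1 - a 1 * b 0]

-- auxiliary lemmas

lemma enormSq_nonneg (v : Fin 3 → ℂ) : 0 ≤ enormSq v :=
  Finset.sum_nonneg fun _ _ => sq_nonneg _

lemma sw_nonneg (α : ℝ × ℝ) (n : ℤ × ℤ) : 0 ≤ sw α n :=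
  div_nonneg zero_le_one (Real.sqrt_nonneg _)

lemma sq_abs_sub_le (u v : ℂ) :
    ‖u - v‖ ^ 2 ≤ 2 * ‖u‖ ^ 2 + 2 * ‖v‖ ^ 2 := by
  have h : ‖u - v‖ ≤ ‖u‖ + ‖v‖ := by
    have := norm_sub_le u v; simpa using this
  nlinarith [mul_self_le_mul_self (norm_nonneg (u - v)) h,
    sq_nonneg (‖u‖ - ‖v‖)]

lemma alphaNorm_nonneg (α : ℝ × ℝ) (n : ℤ × ℤ) : 0 ≤ alphaNorm α n := Real.sqrt_nonneg _

lemma alphaNorm_sq (α : ℝ × ℝ) (n : ℤ × ℤ) :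
    (alphaNorm α n)^2 = (α.1 + (n.1 : ℝ))^2 + (α.2 + (n.2 : ℝ))^2 :=
  Real.sq_sqrt (by positivity)

lemma betaN_abs_sq (k : ℝ) (hk : 0 < k) (α : ℝ × ℝ) (n : ℤ × ℤ) (h : alphaNorm α n ≠ k) :
    ‖betaN k α n‖ ^ 2 = |k^2 - (alphaNorm α n)^2| := by
  unfold betaN
  set t := alphaNorm α n with ht'
  have ht : 0 ≤ t := alphaNorm_nonneg α n
  by_cases hlt : t < k
  · rw [if_pos hlt, Complex.norm_real, Real.norm_eq_abs]
    have h1 : 0 ≤ k^2 - t^2 := by nlinarith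
    rw [abs_of_nonneg (Real.sqrt_nonneg _), Real.sq_sqrt h1, abs_of_nonneg h1]
  · rw [if_neg hlt, norm_mul, Complex.norm_I, one_mul, Complex.norm_real, Real.norm_eq_abs]
    have hgt : k < t := lt_of_le_of_ne (not_lt.mp hlt) (Ne.symm h)
    have h1 : 0 ≤ t^2 - k^2 := by nlinarith
    rw [abs_of_nonneg (Real.sqrt_nonneg _), Real.sq_sqrt h1, abs_of_neg (by nlinarith : k^2 - t^2 < 0)]
    ring

lemma betaN_abs_sq_pos (k : ℝ) (hk : 0 < k) (α : ℝ × ℝ) (n : ℤ × ℤ) (h : alphaNorm α n ≠ k) :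
    0 < ‖betaN k α n‖ ^ 2 := by
  rw [betaN_abs_sq k hk α n h]
  have : k^2 - (alphaNorm α n)^2 ≠ 0 := by
    intro h0
    apply h
    have ht : 0 ≤ alphaNorm α n := alphaNorm_nonneg α n
    nlinarith [sq_nonneg (alphaNorm α n - k), sq_nonneg (alphaNorm α n + k)]
  exact abs_pos.mpr this

lemma finite_low_s8 (α : ℝ × ℝ) (R : ℝ) :
    {n : ℤ × ℤ | (α.1 + (n.1 : ℝ))^2 + (α.2 + (n.2 : ℝ))^2 ≤ R}.Finite := by
  rcases le_or_gt 0 R with hR | hR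
  · apply Set.Finite.subset
      (Set.Finite.prod (Set.finite_Icc (⌈-α.1 - Real.sqrt R⌉) (⌊-α.1 + Real.sqrt R⌋))
        (Set.finite_Icc (⌈-α.2 - Real.sqrt R⌉) (⌊-α.2 + Real.sqrt R⌋)))
    rintro ⟨n1, n2⟩ hn
    simp only [Set.mem_setOf_eq] at hn
    have h1 : |α.1 + (n1 : ℝ)| ≤ Real.sqrt R := by
      rw [← Real.sqrt_sq_eq_abs]
      exact Real.sqrt_le_sqrt (by nlinarith [sq_nonneg (α.2 + (n2 : ℝ))])
    have h2 : |α.2 + (n2 : ℝ)| ≤ Real.sqrt R := by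
      rw [← Real.sqrt_sq_eq_abs]
      exact Real.sqrt_le_sqrt (by nlinarith [sq_nonneg (α.1 + (n1 : ℝ))])
    rw [abs_le] at h1 h2
    constructor
    · exact ⟨Int.ceil_le.mpr (by linarith [h1.1]), Int.le_floor.mpr (by linarith [h1.2])⟩
    · exact ⟨Int.ceil_le.mpr (by linarith [h2.1]), Int.le_floor.mpr (by linarith [h2.2])⟩
  · have : {n : ℤ × ℤ | (α.1 + (n.1 : ℝ))^2 + (α.2 + (n.2 : ℝ))^2 ≤ R} = ∅ := by
      ext n; simp only [Set.mem_setOf_eq, Set.mem_empty_iff_false, iff_false, not_le]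
      nlinarith [sq_nonneg (α.1 + (n.1 : ℝ)), sq_nonneg (α.2 + (n.2 : ℝ))]
    rw [this]; exact Set.finite_empty

lemma beta_lower (k : ℝ) (hk : 0 < k) (α : ℝ × ℝ)
    (hwood : ∀ n : ℤ × ℤ, alphaNorm α n ≠ k) :
    ∃ M : ℝ, 0 < M ∧ ∀ n : ℤ × ℤ,
      1 + (alphaNorm α n)^2 ≤ M * ‖betaN k α n‖ ^ 2 := by
  set S := {n : ℤ × ℤ | (α.1 + (n.1 : ℝ))^2 + (α.2 + (n.2 : ℝ))^2 ≤ 2*k^2 + 1} with hS'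
  have hS : S.Finite := finite_low_s8 α _
  have himg : ((fun n => (1 + (alphaNorm α n)^2) / ‖betaN k α n‖^2) '' S).Finite :=
    hS.image _
  obtain ⟨M0, hM0⟩ := himg.bddAbove
  refine ⟨max M0 2, lt_of_lt_of_le two_pos (le_max_right _ _), fun n => ?_⟩
  have hB : 0 < ‖betaN k α n‖^2 := betaN_abs_sq_pos k hk α n (hwood n)
  by_cases hn : n ∈ S
  · have hle := hM0 (Set.mem_image_of_mem _ hn)
    have := (div_le_iff₀ hB).mp (le_trans hle (le_max_left M0 2))
    linarith
  · simp only [hS', Set.mem_setOf_eq, not_le] at hn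
    have hxy : 2*k^2 + 1 < (alphaNorm α n)^2 := by rw [alphaNorm_sq]; linarith
    have habs : ‖betaN k α n‖^2 = (alphaNorm α n)^2 - k^2 := by
      rw [betaN_abs_sq k hk α n (hwood n), abs_of_neg (by nlinarith : k^2 - (alphaNorm α n)^2 < 0)]
      ring
    rw [habs]
    have h2 : 1 + (alphaNorm α n)^2 ≤ 2 * ((alphaNorm α n)^2 - k^2) := by nlinarith
    have : (2:ℝ) * ((alphaNorm α n)^2 - k^2) ≤ max M0 2 * ((alphaNorm α n)^2 - k^2) := by
      apply mul_le_mul_of_nonneg_right (le_max_right _ _); nlinarith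
    linarith

lemma arith_bound (k M B x y A0 A1 D P Q W : ℝ) (hB : 0 < B)
    (hA0 : 0 ≤ A0) (hA1 : 0 ≤ A1) (hD : 0 ≤ D) (hk4 : 0 ≤ k^4)
    (hP : P ≤ 2*k^4*A0 + 2*x^2*D) (hQ : Q ≤ 2*k^4*A1 + 2*y^2*D)
    (hW : W ≤ k^4*(2*x^2*A1 + 2*y^2*A0))
    (hMB : 1 + (x^2 + y^2) ≤ M * B) :
    (P + Q + W) / B ≤ M * (4*k^4 + 2) * (A0 + A1 + D) := by
  rw [div_le_iff₀ hB]
  have hS : 0 ≤ A0 + A1 + D := by linarith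
  have hprod : (1 + (x^2 + y^2)) * (A0 + A1 + D) ≤ M * B * (A0 + A1 + D) :=
    mul_le_mul_of_nonneg_right hMB hS
  have hkey : P + Q + W ≤ (2*k^4 + 2) * ((1 + (x^2+y^2)) * (A0 + A1 + D)) := by
    nlinarith [mul_nonneg (sq_nonneg x) hD, mul_nonneg (sq_nonneg y) hD,
      mul_nonneg (sq_nonneg x) hA0, mul_nonneg (sq_nonneg y) hA1,
      mul_nonneg hk4 (mul_nonneg (sq_nonneg x) hA0),
      mul_nonneg hk4 (mul_nonneg (sq_nonneg y) hA1),
      mul_nonneg hk4 (mul_nonneg (sq_nonneg x) hD),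
      mul_nonneg hk4 (mul_nonneg (sq_nonneg y) hD),
      mul_nonneg hk4 hA0, mul_nonneg hk4 hA1, mul_nonneg hk4 hD]
  have hfin : (2*k^4 + 2) * ((1 + (x^2+y^2)) * (A0 + A1 + D))
      ≤ (2*k^4 + 2) * (M * B * (A0 + A1 + D)) :=
    mul_le_mul_of_nonneg_left hprod (by positivity)
  have hMBS : 0 ≤ M * B * (A0 + A1 + D) := le_trans (by positivity) hprod
  have heq : M * (4*k^4 + 2) * (A0 + A1 + D) * B
      = (2*k^4 + 2) * (M * B * (A0 + A1 + D)) + (2*k^4) * (M * B * (A0 + A1 + D)) := by ring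
  have h2k : (0 : ℝ) ≤ (2*k^4) * (M * B * (A0 + A1 + D)) := mul_nonneg (by linarith) hMBS
  linarith

lemma ccross_apply0 (a b : Fin 3 → ℂ) : ccross a b 0 = a 1 * b 2 - a 2 * b 1 := rfl
lemma ccross_apply1 (a b : Fin 3 → ℂ) : ccross a b 1 = a 2 * b 0 - a 0 * b 2 := rfl
lemma ccross_apply2 (a b : Fin 3 → ℂ) : ccross a b 2 = a 0 * b 1 - a 1 * b 0 := rfl

lemma pointwise_bound (k : ℝ) (hk : 0 < k) (α : ℝ × ℝ) (n : ℤ × ℤ) (M : ℝ)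
    (hw : alphaNorm α n ≠ k)
    (hM : 1 + (alphaNorm α n)^2 ≤ M * ‖betaN k α n‖ ^ 2)
    (En : Fin 3 → ℂ) (hE : En 2 = 0) :
    enormSq (Rsymb k α n En) + enormSq (ccross (alphaVec α n) (Rsymb k α n En))
      ≤ (M * (4 * k^4 + 2)) * (enormSq En + ‖cdot (alphaVec α n) En‖^2) := by
  have hxn : (0:ℝ) ≤ 1 := zero_le_one
  set x : ℝ := α.1 + (n.1 : ℝ) with hx
  set y : ℝ := α.2 + (n.2 : ℝ) with hy
  set E0 := En 0 with hE0
  set E1 := En 1 with hE1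
  set β := betaN k α n with hβ'
  set B := ‖β‖ ^ 2 with hB'
  have hB : 0 < B := betaN_abs_sq_pos k hk α n hw
  have hβ0 : β ≠ 0 := by
    intro h0; rw [hB', h0] at hB; simp at hB
  set c : ℂ := -(1 / (Complex.I * β)) with hc'
  set d : ℂ := (x : ℂ) * E0 + (y : ℂ) * E1 with hd'
  have ha0 : alphaVec α n 0 = (x : ℂ) := rfl
  have ha1 : alphaVec α n 1 = (y : ℂ) := rfl
  have ha2 : alphaVec α n 2 = 0 := rfl
  have hd : cdot (alphaVec α n) En = d := by
    rw [cdot, ha0, ha1, ha2, hE, hd']; ring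
  have habs : ∀ w : ℂ, ‖c * w‖ ^ 2 = ‖w‖ ^ 2 / B := by
    intro w
    rw [hc', norm_mul, norm_neg, norm_div, norm_one, norm_mul, Complex.norm_I, one_mul]
    field_simp [hB']
    rw [hB']; ring
  have h0 : Rsymb k α n En 0 = c * ((k : ℂ)^2 * E0 - d * (x : ℂ)) := by
    show -(1 / (Complex.I * betaN k α n)) *
      ((k : ℂ)^2 * En 0 - cdot (alphaVec α n) En * alphaVec α n 0) = _
    rw [hd, ha0]
  have h1 : Rsymb k α n En 1 = c * ((k : ℂ)^2 * E1 - d * (y : ℂ)) := by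
    show -(1 / (Complex.I * betaN k α n)) *
      ((k : ℂ)^2 * En 1 - cdot (alphaVec α n) En * alphaVec α n 1) = _
    rw [hd, ha1]
  have h2 : Rsymb k α n En 2 = 0 := by
    show -(1 / (Complex.I * betaN k α n)) *
      ((k : ℂ)^2 * En 2 - cdot (alphaVec α n) En * alphaVec α n 2) = 0
    rw [hE, ha2]; ring
  have hc0 : ccross (alphaVec α n) (Rsymb k α n En) 0 = 0 := by
    rw [ccross_apply0, h2, ha2]; ring
  have hc1 : ccross (alphaVec α n) (Rsymb k α n En) 1 = 0 := by
    rw [ccross_apply1, h2, ha2]; ring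
  have hc2 : ccross (alphaVec α n) (Rsymb k α n En) 2
      = c * ((k : ℂ)^2 * ((x : ℂ) * E1 - (y : ℂ) * E0)) := by
    rw [ccross_apply2, h0, h1, ha0, ha1, hd']; ring
  have hLHS : enormSq (Rsymb k α n En) + enormSq (ccross (alphaVec α n) (Rsymb k α n En))
      = (‖(k : ℂ)^2 * E0 - d * (x : ℂ)‖ ^ 2
        + ‖(k : ℂ)^2 * E1 - d * (y : ℂ)‖ ^ 2
        + ‖(k : ℂ)^2 * ((x : ℂ) * E1 - (y : ℂ) * E0)‖ ^ 2) / B := by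
    rw [enormSq, enormSq, Fin.sum_univ_three, Fin.sum_univ_three, h0, h1, h2, hc0, hc1, hc2,
      habs, habs, habs]
    simp only [norm_zero]
    ring
  have hRHS : enormSq En + ‖cdot (alphaVec α n) En‖^2
      = ‖E0‖ ^ 2 + ‖E1‖ ^ 2 + ‖d‖ ^ 2 := by
    rw [enormSq, Fin.sum_univ_three, hd, hE]
    simp only [norm_zero]
    ring
  rw [hLHS, hRHS]
  set A0 := ‖E0‖ ^ 2 with hA0'
  set A1 := ‖E1‖ ^ 2 with hA1'
  set D := ‖d‖ ^ 2 with hD'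
  have hA0n : 0 ≤ A0 := hA0' ▸ sq_nonneg _
  have hA1n : 0 ≤ A1 := hA1' ▸ sq_nonneg _
  have hDn : 0 ≤ D := hD' ▸ sq_nonneg _
  have hK : ‖(k:ℂ)^2‖ = k^2 := by
    rw [norm_pow, Complex.norm_real, Real.norm_eq_abs, abs_of_pos hk]
  have hb0 : ‖(k : ℂ)^2 * E0 - d * (x : ℂ)‖ ^ 2 ≤ 2*k^4*A0 + 2*x^2*D := by
    have h' := sq_abs_sub_le ((k : ℂ)^2 * E0) (d * (x : ℂ))
    rw [norm_mul, norm_mul, hK, Complex.norm_real, Real.norm_eq_abs] at h'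
    calc ‖(k : ℂ)^2 * E0 - d * (x : ℂ)‖ ^ 2
        ≤ 2 * (k^2 * ‖E0‖)^2 + 2 * (‖d‖ * |x|)^2 := h'
      _ = 2*k^4*A0 + 2*x^2*D := by rw [mul_pow, mul_pow, sq_abs, hA0', hD']; ring
  have hb1 : ‖(k : ℂ)^2 * E1 - d * (y : ℂ)‖ ^ 2 ≤ 2*k^4*A1 + 2*y^2*D := by
    have h' := sq_abs_sub_le ((k : ℂ)^2 * E1) (d * (y : ℂ))
    rw [norm_mul, norm_mul, hK, Complex.norm_real, Real.norm_eq_abs] at h'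
    calc ‖(k : ℂ)^2 * E1 - d * (y : ℂ)‖ ^ 2
        ≤ 2 * (k^2 * ‖E1‖)^2 + 2 * (‖d‖ * |y|)^2 := h'
      _ = 2*k^4*A1 + 2*y^2*D := by rw [mul_pow, mul_pow, sq_abs, hA1', hD']; ring
  have hb2 : ‖(k : ℂ)^2 * ((x : ℂ) * E1 - (y : ℂ) * E0)‖ ^ 2
      ≤ k^4 * (2*x^2*A1 + 2*y^2*A0) := by
    have h' := sq_abs_sub_le ((x : ℂ) * E1) ((y : ℂ) * E0)
    rw [norm_mul, norm_mul, Complex.norm_real, Real.norm_eq_abs, Complex.norm_real, Real.norm_eq_abs] at h'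
    rw [norm_mul, hK, mul_pow]
    have h'' : ‖(x:ℂ) * E1 - (y:ℂ) * E0‖ ^ 2 ≤ 2*x^2*A1 + 2*y^2*A0 := by
      calc ‖(x:ℂ) * E1 - (y:ℂ) * E0‖ ^ 2
          ≤ 2 * (|x| * ‖E1‖)^2 + 2 * (|y| * ‖E0‖)^2 := h'
        _ = 2*x^2*A1 + 2*y^2*A0 := by rw [mul_pow, mul_pow, sq_abs, sq_abs, hA0', hA1']; ring
    have hk4 : (0:ℝ) ≤ (k^2)^2 := sq_nonneg _
    calc (k^2)^2 * ‖(x:ℂ) * E1 - (y:ℂ) * E0‖ ^ 2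
        ≤ (k^2)^2 * (2*x^2*A1 + 2*y^2*A0) := mul_le_mul_of_nonneg_left h'' hk4
      _ = k^4 * (2*x^2*A1 + 2*y^2*A0) := by ring
  have hxy : x^2 + y^2 = (alphaNorm α n)^2 := (alphaNorm_sq α n).symm
  have hMB : 1 + (x^2 + y^2) ≤ M * B := by rw [hxy]; exact hM
  exact arith_bound k M B x y A0 A1 D _ _ _ hB hA0n hA1n hDn (by positivity) hb0 hb1 hb2 hMB

/-- Continuity of the transparent boundary operator
`R : H_t^{-1/2}(div,Γ_b) → H_t^{-1/2}(curl,Γ_b)`: a uniform modewise bound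
`(1+|αₙ|²)^{−1/2}(|R̂ₙ|² + |αₙ×R̂ₙ|²) ≤ C(1+|αₙ|²)^{−1/2}(|Ẽₙ|² + |αₙ·Ẽₙ|²)`, and
consequently summable input sequences map boundedly to summable output sequences. -/
theorem R_symbol_bound_and_continuity (k : ℝ) (hk : 0 < k) (α : ℝ × ℝ)
    (hwood : ∀ n : ℤ × ℤ, alphaNorm α n ≠ k) :
    ∃ C : ℝ, 0 < C ∧
      (∀ (n : ℤ × ℤ) (En : Fin 3 → ℂ), En 2 = 0 →
        sw α n * (enormSq (Rsymb k α n En) + enormSq (ccross (alphaVec α n) (Rsymb k α n En)))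
          ≤ C * (sw α n * (enormSq En + ‖cdot (alphaVec α n) En‖^2))) ∧
      (∀ Et : ℤ × ℤ → Fin 3 → ℂ, (∀ n, Et n 2 = 0) →
        (Summable fun n : ℤ × ℤ =>
          sw α n * (enormSq (Et n) + ‖cdot (alphaVec α n) (Et n)‖^2)) →
        (Summable fun n : ℤ × ℤ =>
          sw α n * (enormSq (Rsymb k α n (Et n))
            + enormSq (ccross (alphaVec α n) (Rsymb k α n (Et n))))) ∧
        (∑' n : ℤ × ℤ, sw α n * (enormSq (Rsymb k α n (Et n))
            + enormSq (ccross (alphaVec α n) (Rsymb k α n (Et n)))))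
          ≤ C * ∑' n : ℤ × ℤ,
              sw α n * (enormSq (Et n) + ‖cdot (alphaVec α n) (Et n)‖^2)) := by
  
  obtain ⟨M, hM, hMall⟩ := beta_lower k hk α hwood
  set C := M * (4 * k^4 + 2) with hC'
  have hC : 0 < C := by positivity
  have hpt : ∀ (n : ℤ × ℤ) (En : Fin 3 → ℂ), En 2 = 0 →
      sw α n * (enormSq (Rsymb k α n En) + enormSq (ccross (alphaVec α n) (Rsymb k α n En)))
        ≤ C * (sw α n * (enormSq En + ‖cdot (alphaVec α n) En‖^2)) := by
    intro n En hE
    have h := pointwise_bound k hk α n M (hwood n) (hMall n) En hE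
    have hsw : 0 ≤ sw α n := sw_nonneg α n
    calc sw α n * (enormSq (Rsymb k α n En) + enormSq (ccross (alphaVec α n) (Rsymb k α n En)))
        ≤ sw α n * (C * (enormSq En + ‖cdot (alphaVec α n) En‖^2)) :=
          mul_le_mul_of_nonneg_left h hsw
      _ = C * (sw α n * (enormSq En + ‖cdot (alphaVec α n) En‖^2)) := by ring
  refine ⟨C, hC, hpt, ?_⟩
  intro Et hEt hsum
  set f : ℤ × ℤ → ℝ := fun n => sw α n * (enormSq (Rsymb k α n (Et n))
      + enormSq (ccross (alphaVec α n) (Rsymb k α n (Et n)))) with hf'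
  set g : ℤ × ℤ → ℝ := fun n => sw α n *
      (enormSq (Et n) + ‖cdot (alphaVec α n) (Et n)‖^2) with hg'
  have hfg : ∀ n, f n ≤ C * g n := fun n => hpt n (Et n) (hEt n)
  have hf0 : ∀ n, 0 ≤ f n := fun n =>
    mul_nonneg (sw_nonneg α n) (add_nonneg (enormSq_nonneg _) (enormSq_nonneg _))
  have hsC : Summable (fun n => C * g n) := hsum.mul_left C
  have hsf : Summable f := hsC.of_nonneg_of_le hf0 hfg
  refine ⟨hsf, ?_⟩
  calc ∑' n, f n ≤ ∑' n, C * g n := Summable.tsum_le_tsum hfg hsf hsC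
    _ = C * ∑' n, g n := tsum_mul_left
end
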